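/- arXiv:2206.09473 — 4 statements merged into one kernel-verified Lean document; each statement's English description precedes it below -/
import Mathlib

section
/- Let A be an n×n alternating matrix over a commutative ring and M an n×n matrix. Then the Pfaffian of M^T A M equals det(M) times the Pfaffian of A. -/
open Matrix

/-- The Pfaffian of a square matrix, defined by recursive expansion along the
first row.  For alternating matrices this agrees with the signed sum over
perfect matchings; for matrices of odd size it is `0`. -/
noncomputable def Matrix.pf {R : Type*} [CommRing R] : {n : ℕ} → Matrix (Fin n) (Fin n) R → R
  | 0, _ => 1
  | 1, _ => 0
  | (n + 2), A => ∑ j : Fin (n + 1),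
      (-1 : R) ^ (j : ℕ) * A 0 j.succ *
        Matrix.pf (A.submatrix (Fin.succ ∘ j.succAbove) (Fin.succ ∘ j.succAbove))

namespace PfAux

lemma val_sa {n : ℕ} (p : Fin (n+1)) (i : Fin n) :
    ((p.succAbove i : Fin (n+1)) : ℕ) = if (i:ℕ) < (p:ℕ) then (i:ℕ) else (i:ℕ)+1 := by
  rcases Nat.lt_or_ge (i:ℕ) (p:ℕ) with h | h
  · rw [if_pos h, Fin.succAbove_of_castSucc_lt _ _ (by simpa [Fin.lt_def] using h)]; rfl
  · rw [if_neg (Nat.not_lt.2 h), Fin.succAbove_of_le_castSucc _ _ (by simpa [Fin.le_def] using h)]; rfl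

/-- the involution used for the double-expansion cancellation -/
def psi (m' : ℕ) (p : Fin (m'+2) × Fin (m'+1)) : Fin (m'+2) × Fin (m'+1) :=
  if h : (p.2:ℕ) < (p.1:ℕ) then
    (p.2.castSucc, ⟨(p.1:ℕ)-1, by have := p.2.isLt; omega⟩)
  else
    (p.2.succ, ⟨(p.1:ℕ), by have := p.2.isLt; omega⟩)

lemma psi_ne (m' : ℕ) (p : Fin (m'+2) × Fin (m'+1)) : psi m' p ≠ p := by
  rw [psi]
  split_ifs with h
  · intro hc
    have := congrArg (fun q => ((q.1 : Fin (m'+2)) : ℕ)) hc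
    simp at this; omega
  · intro hc
    have := congrArg (fun q => ((q.1 : Fin (m'+2)) : ℕ)) hc
    simp at this; omega

lemma psi_psi (m' : ℕ) (p : Fin (m'+2) × Fin (m'+1)) : psi m' (psi m' p) = p := by
  rw [psi, psi]
  split_ifs with h h1 h2
  · simp at h1; omega
  · refine Prod.ext (Fin.ext ?_) (Fin.ext ?_) <;> simp <;> omega
  · refine Prod.ext (Fin.ext ?_) (Fin.ext ?_) <;> simp <;> omega
  · simp at h2; omega

variable {R : Type*} [CommRing R] {N : Type*} [AddCommGroup N] [Module R N]
variable (b : N →ₗ[R] N →ₗ[R] R)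

noncomputable def pfg {m : ℕ} (v : Fin m → N) : R :=
  Matrix.pf (Matrix.of fun i j => b (v i) (v j))

lemma pfg_expand {m : ℕ} (v : Fin (m+2) → N) :
    pfg b v = ∑ j : Fin (m+1), (-1:R)^(j:ℕ) * b (v 0) (v j.succ) *
      pfg b (v ∘ Fin.succ ∘ j.succAbove) := by
  rw [pfg, Matrix.pf]
  rfl

lemma pfg_one (v : Fin 1 → N) : pfg b v = 0 := by simp [pfg, Matrix.pf]

/-- the generic summand of the double expansion -/
noncomputable def G {m' : ℕ} (v : Fin (m'+4) → N) (p : Fin (m'+2) × Fin (m'+1)) : R :=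
  (-1:R)^((p.1:ℕ) + (p.2:ℕ) + 1) *
    (b (v 0) (v (Fin.succ (Fin.succ p.1))) *
     b (v 0) (v (Fin.succ ((Fin.succ p.1).succAbove (Fin.succ p.2))))) *
    pfg b (v ∘ (Fin.succ ∘ (Fin.succ p.1).succAbove ∘ Fin.succ ∘ p.2.succAbove))

lemma G_cancel {m' : ℕ} (v : Fin (m'+4) → N) (l : Fin (m'+2)) (r : Fin (m'+1)) :
    G b v (l, r) + G b v (psi m' (l, r)) = 0 := by
  rw [psi]
  dsimp only
  split_ifs with h
  · -- q = (castSucc r, ⟨l-1⟩)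
    simp only [G]
    have hl1 : 1 ≤ (l:ℕ) := by omega
    have e1 : (Fin.succ (Fin.succ (Fin.castSucc r))) =
        Fin.succ ((Fin.succ l).succAbove (Fin.succ r)) := by
      apply Fin.ext
      simp only [Fin.val_succ, Fin.coe_castSucc, val_sa]
      split_ifs <;> omega
    have e2 : Fin.succ ((Fin.succ (Fin.castSucc r)).succAbove
        (Fin.succ (⟨(l:ℕ)-1, by have := r.isLt; omega⟩ : Fin (m'+1)))) =
        Fin.succ (Fin.succ l) := by
      apply Fin.ext
      simp only [Fin.val_succ, Fin.coe_castSucc, val_sa]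
      split_ifs <;> omega
    have e3 : v ∘ (Fin.succ ∘ (Fin.succ (Fin.castSucc r)).succAbove ∘ Fin.succ ∘
        (⟨(l:ℕ)-1, by have := r.isLt; omega⟩ : Fin (m'+1)).succAbove) =
        v ∘ (Fin.succ ∘ (Fin.succ l).succAbove ∘ Fin.succ ∘ r.succAbove) := by
      funext x
      apply congrArg v
      apply Fin.ext
      simp only [Function.comp_apply, Fin.val_succ, val_sa, Fin.coe_castSucc]
      split_ifs <;> omega
    have e4 : ((Fin.castSucc r : Fin (m'+2)):ℕ) +
        ((⟨(l:ℕ)-1, by have := r.isLt; omega⟩ : Fin (m'+1)):ℕ) + 1 = (l:ℕ) + (r:ℕ) := by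
      simp only [Fin.coe_castSucc]
      omega
    rw [e1, e2, e3, e4, pow_succ]
    ring
  · -- q = (r.succ, ⟨l⟩)
    simp only [G]
    have hle : (l:ℕ) ≤ (r:ℕ) := by omega
    have e1 : (Fin.succ (Fin.succ (Fin.succ r)) : Fin (m'+4)) =
        Fin.succ ((Fin.succ l).succAbove (Fin.succ r)) := by
      apply Fin.ext
      simp only [Fin.val_succ, val_sa]
      split_ifs <;> omega
    have e2 : Fin.succ ((Fin.succ (Fin.succ r)).succAbove
        (Fin.succ (⟨(l:ℕ), by have := r.isLt; omega⟩ : Fin (m'+1)))) =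
        Fin.succ (Fin.succ l) := by
      apply Fin.ext
      simp only [Fin.val_succ, val_sa]
      split_ifs <;> omega
    have e3 : v ∘ (Fin.succ ∘ (Fin.succ (Fin.succ r)).succAbove ∘ Fin.succ ∘
        (⟨(l:ℕ), by have := r.isLt; omega⟩ : Fin (m'+1)).succAbove) =
        v ∘ (Fin.succ ∘ (Fin.succ l).succAbove ∘ Fin.succ ∘ r.succAbove) := by
      funext x
      apply congrArg v
      apply Fin.ext
      simp only [Function.comp_apply, Fin.val_succ, val_sa]
      split_ifs <;> omega
    have e4 : ((Fin.succ r : Fin (m'+2)):ℕ) +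
        ((⟨(l:ℕ), by have := r.isLt; omega⟩ : Fin (m'+1)):ℕ) + 1 = (l:ℕ) + (r:ℕ) + 2 := by
      simp only [Fin.val_succ]
      omega
    rw [e1, e2, e3, e4, pow_succ, pow_succ, pow_succ]
    ring

lemma pfg_zero_one (hb : ∀ x, b x x = 0) :
    ∀ {m : ℕ} (v : Fin (m+2) → N), v 0 = v 1 → pfg b v = 0 := by
  intro m
  match m with
  | 0 =>
    intro v hv
    rw [pfg_expand]
    apply Finset.sum_eq_zero
    intro l _
    have h1 : (Fin.succ l : Fin 2) = 1 := by
      apply Fin.ext; have := l.isLt; simp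
    rw [h1, ← hv, hb, mul_zero, zero_mul]
  | 1 =>
    intro v hv
    rw [pfg_expand]
    apply Finset.sum_eq_zero
    intro l _
    induction l using Fin.cases with
    | zero =>
      have h1 : (Fin.succ (0 : Fin 2) : Fin 3) = 1 := by apply Fin.ext; simp
      rw [h1, ← hv, hb, mul_zero, zero_mul]
    | succ l0 =>
      rw [pfg_one b, mul_zero]
  | (m'+2) =>
    intro v hv
    rw [pfg_expand, Fin.sum_univ_succ]
    have h1 : (Fin.succ (0 : Fin (m'+3)) : Fin (m'+4)) = 1 := by apply Fin.ext; simp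
    rw [h1, ← hv, hb, mul_zero, zero_mul, zero_add]
    have key : ∀ l' : Fin (m'+2),
        (-1:R)^((Fin.succ l' : Fin (m'+3)):ℕ) * b (v 0) (v (Fin.succ (Fin.succ l'))) *
          pfg b (v ∘ Fin.succ ∘ (Fin.succ l').succAbove)
        = ∑ r : Fin (m'+1), G b v (l', r) := by
      intro l'
      rw [pfg_expand b (v ∘ Fin.succ ∘ (Fin.succ l').succAbove), Finset.mul_sum]
      refine Finset.sum_congr rfl fun r _ => ?_
      have hW0 : (v ∘ Fin.succ ∘ (Fin.succ l').succAbove) 0 = v 0 := by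
        show v _ = v 0
        rw [hv]
        apply congrArg v
        apply Fin.ext
        simp [val_sa]
      rw [hW0]
      show _ = G b v (l', r)
      rw [G]
      have ht : (v ∘ Fin.succ ∘ (Fin.succ l').succAbove) ∘ Fin.succ ∘ r.succAbove =
          v ∘ (Fin.succ ∘ (Fin.succ l').succAbove ∘ Fin.succ ∘ r.succAbove) := rfl
      have hW : (v ∘ Fin.succ ∘ (Fin.succ l').succAbove) (Fin.succ r) =
          v (Fin.succ ((Fin.succ l').succAbove (Fin.succ r))) := rfl
      rw [ht, hW, Fin.val_succ, pow_add, pow_succ]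
      ring
    rw [Finset.sum_congr rfl (fun l' _ => key l'), ← Finset.sum_product']
    apply Finset.sum_involution (fun p _ => psi m' p)
    · intro p _
      exact G_cancel b v p.1 p.2
    · intro p _ _
      exact psi_ne m' p
    · intro p _
      exact Finset.mem_univ _
    · intro p _
      exact psi_psi m' p

lemma update_comp_zero {m : ℕ} (v : Fin (m+2) → N) (j : Fin (m+1)) (z : N) :
    (Function.update v 0 z) ∘ Fin.succ ∘ j.succAbove = v ∘ Fin.succ ∘ j.succAbove := by
  funext t
  simp [Function.update_of_ne (Fin.succ_ne_zero _)]

lemma update_comp_self {m : ℕ} (v : Fin (m+2) → N) (k : Fin (m+1)) (z : N) :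
    (Function.update v k.succ z) ∘ Fin.succ ∘ k.succAbove = v ∘ Fin.succ ∘ k.succAbove := by
  funext t
  have h : Fin.succ (k.succAbove t) ≠ Fin.succ k := by
    simp [Fin.succ_inj, Fin.succAbove_ne]
  simp [Function.update_of_ne h]

lemma update_comp_ne {m : ℕ} (v : Fin (m+2) → N) {j k : Fin (m+1)} (h : j ≠ k) :
    ∃ l : Fin m, ∀ z, (Function.update v k.succ z) ∘ Fin.succ ∘ j.succAbove
      = Function.update (v ∘ Fin.succ ∘ j.succAbove) l z := by
  obtain ⟨l, hl⟩ := Fin.exists_succAbove_eq (Ne.symm h)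
  refine ⟨l, fun z => ?_⟩
  funext t
  by_cases ht : t = l
  · subst ht
    show Function.update v k.succ z (Fin.succ (j.succAbove t)) = _
    rw [hl, Function.update_self, Function.update_self]
  · have h2 : j.succAbove t ≠ k := fun hc => ht (Fin.succAbove_right_injective (hl ▸ hc))
    have h1 : Fin.succ (j.succAbove t) ≠ Fin.succ k := by simpa [Fin.succ_inj] using h2
    simp [Function.update_of_ne h1, Function.update_of_ne ht]

lemma pfg_update_add : ∀ {m : ℕ} (v : Fin m → N) (i : Fin m) (x y : N),
    pfg b (Function.update v i (x + y)) =
      pfg b (Function.update v i x) + pfg b (Function.update v i y) := by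
  intro m
  induction m using Nat.strong_induction_on with
  | _ m IH =>
    match m with
    | 0 => exact fun v i => i.elim0
    | 1 => intro v i x y; simp [pfg, Matrix.pf]
    | (m+2) =>
      intro v i x y
      induction i using Fin.cases with
      | zero =>
        rw [pfg_expand, pfg_expand, pfg_expand, ← Finset.sum_add_distrib]
        refine Finset.sum_congr rfl fun j _ => ?_
        rw [update_comp_zero, update_comp_zero, update_comp_zero]
        simp only [Function.update_self, Function.update_of_ne (Fin.succ_ne_zero j), map_add,
          LinearMap.add_apply]
        ring
      | succ k =>
        rw [pfg_expand, pfg_expand, pfg_expand, ← Finset.sum_add_distrib]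
        refine Finset.sum_congr rfl fun j _ => ?_
        by_cases hj : j = k
        · subst hj
          rw [update_comp_self, update_comp_self, update_comp_self]
          simp only [Function.update_self, Function.update_of_ne (Ne.symm (Fin.succ_ne_zero j)),
            map_add]
          ring
        · obtain ⟨l, he⟩ := update_comp_ne v hj
          have hne : j.succ ≠ k.succ := by simpa [Fin.succ_inj] using hj
          rw [he, he, he]
          simp only [Function.update_of_ne (Ne.symm (Fin.succ_ne_zero k)),
            Function.update_of_ne hne]
          rw [IH m (by omega) _ l x y]
          ring

lemma pfg_update_smul : ∀ {m : ℕ} (v : Fin m → N) (i : Fin m) (c : R) (x : N),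
    pfg b (Function.update v i (c • x)) = c * pfg b (Function.update v i x) := by
  intro m
  induction m using Nat.strong_induction_on with
  | _ m IH =>
    match m with
    | 0 => exact fun v i => i.elim0
    | 1 => intro v i c x; simp [pfg, Matrix.pf]
    | (m+2) =>
      intro v i c x
      induction i using Fin.cases with
      | zero =>
        rw [pfg_expand, pfg_expand, Finset.mul_sum]
        refine Finset.sum_congr rfl fun j _ => ?_
        rw [update_comp_zero, update_comp_zero]
        simp only [Function.update_self, Function.update_of_ne (Fin.succ_ne_zero j), _root_.map_smul,
          LinearMap.smul_apply, smul_eq_mul]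
        ring
      | succ k =>
        rw [pfg_expand, pfg_expand, Finset.mul_sum]
        refine Finset.sum_congr rfl fun j _ => ?_
        by_cases hj : j = k
        · subst hj
          rw [update_comp_self, update_comp_self]
          simp only [Function.update_self, Function.update_of_ne (Ne.symm (Fin.succ_ne_zero j)),
            _root_.map_smul, LinearMap.smul_apply, smul_eq_mul]
          ring
        · obtain ⟨l, he⟩ := update_comp_ne v hj
          have hne : j.succ ≠ k.succ := by simpa [Fin.succ_inj] using hj
          rw [he, he]
          simp only [Function.update_of_ne (Ne.symm (Fin.succ_ne_zero k)),
            Function.update_of_ne hne]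
          rw [IH m (by omega) _ l c x]
          ring


set_option maxHeartbeats 2000000 in
lemma pfg_adj (hb : ∀ x, b x x = 0) :
    ∀ {m : ℕ} (v : Fin m → N) (i j : Fin m), (i:ℕ)+1 = (j:ℕ) → v i = v j → pfg b v = 0 := by
  intro m
  induction m using Nat.strong_induction_on with
  | _ m IH =>
    match m with
    | 0 => exact fun v i => i.elim0
    | 1 => intro v i j hij _; have := i.isLt; have := j.isLt; omega
    | (m+2) =>
      intro v i j hij hv
      rcases Nat.eq_zero_or_pos (i:ℕ) with hc0 | hc1
      · -- i = 0, j = 1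
        have hi : i = 0 := Fin.ext (by simpa using hc0)
        have hj : j = 1 := Fin.ext (by simp [Fin.val_one]; omega)
        exact pfg_zero_one b hb v (by rw [← hi, ← hj]; exact hv)
      · have hjc : (j:ℕ) = (i:ℕ) + 1 := by omega
        have hcm : (i:ℕ) + 1 ≤ m + 1 := by have := j.isLt; omega
        set l₁ : Fin (m+1) := ⟨(i:ℕ)-1, by omega⟩ with hl₁
        set l₂ : Fin (m+1) := ⟨(i:ℕ), by omega⟩ with hl₂
        have hne12 : l₁ ≠ l₂ := by
          intro hc
          have := congrArg (fun t : Fin (m+1) => (t:ℕ)) hc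
          simp [hl₁, hl₂] at this
          omega
        have hs1 : Fin.succ l₁ = i := Fin.ext (by simp [hl₁]; omega)
        have hs2 : Fin.succ l₂ = j := Fin.ext (by simp [hl₂]; omega)
        have ht : v ∘ Fin.succ ∘ l₁.succAbove = v ∘ Fin.succ ∘ l₂.succAbove := by
          funext x
          rcases eq_or_ne (x:ℕ) ((i:ℕ)-1) with hx | hx
          · have e1 : Fin.succ (l₁.succAbove x) = j :=
              Fin.ext (by simp only [hl₁, Fin.val_succ, val_sa, Fin.val_mk]; split_ifs <;> omega)
            have e2 : Fin.succ (l₂.succAbove x) = i :=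
              Fin.ext (by simp only [hl₂, Fin.val_succ, val_sa, Fin.val_mk]; split_ifs <;> omega)
            exact (congrArg v e1).trans (hv.symm.trans (congrArg v e2).symm)
          · show v (Fin.succ (l₁.succAbove x)) = v (Fin.succ (l₂.succAbove x))
            apply congrArg v
            apply Fin.ext
            simp only [Fin.val_succ, val_sa, hl₁, hl₂]
            split_ifs <;> simp <;> omega
        have hsgn : (-1:R)^((l₂:ℕ)) = -(-1:R)^((l₁:ℕ)) := by
          have hv2 : (l₂:ℕ) = (l₁:ℕ)+1 := by simp [hl₁, hl₂]; omega
          rw [hv2, pow_succ]; ring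
        have hpair : ((-1:R)^((l₁:ℕ)) * b (v 0) (v (Fin.succ l₁)) *
              pfg b (v ∘ Fin.succ ∘ l₁.succAbove)) +
            ((-1:R)^((l₂:ℕ)) * b (v 0) (v (Fin.succ l₂)) *
              pfg b (v ∘ Fin.succ ∘ l₂.succAbove)) = 0 := by
          rw [hs1, hs2, ht, hsgn, hv]
          ring
        have hzero : ∀ l : Fin (m+1), l ≠ l₁ → l ≠ l₂ →
            (-1:R)^((l:ℕ)) * b (v 0) (v (Fin.succ l)) *
              pfg b (v ∘ Fin.succ ∘ l.succAbove) = 0 := by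
          intro l h1 h2
          have hv1 : (l:ℕ) ≠ (i:ℕ)-1 := fun h => h1 (Fin.ext (by simp [hl₁]; omega))
          have hv2 : (l:ℕ) ≠ (i:ℕ) := fun h => h2 (Fin.ext (by simp [hl₂]; omega))
          apply mul_eq_zero_of_right
          rcases Nat.lt_or_ge (l:ℕ) ((i:ℕ)-1) with hcase | hcase
          · have hi2 : 2 ≤ (i:ℕ) := by omega
            have e1 : Fin.succ (l.succAbove ⟨(i:ℕ)-2, by omega⟩) = i :=
              Fin.ext (by simp only [Fin.val_succ, val_sa, Fin.val_mk]; split_ifs <;> omega)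
            have e2 : Fin.succ (l.succAbove ⟨(i:ℕ)-1, by omega⟩) = j :=
              Fin.ext (by simp only [Fin.val_succ, val_sa, Fin.val_mk]; split_ifs <;> omega)
            have hveq : (v ∘ Fin.succ ∘ l.succAbove) ⟨(i:ℕ)-2, by omega⟩
                = (v ∘ Fin.succ ∘ l.succAbove) ⟨(i:ℕ)-1, by omega⟩ :=
              (congrArg v e1).trans (hv.trans (congrArg v e2).symm)
            exact IH m (by omega) (v ∘ Fin.succ ∘ l.succAbove)
              ⟨(i:ℕ)-2, by omega⟩ ⟨(i:ℕ)-1, by omega⟩ (by simp only [Fin.val_mk]; omega) hveq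
          · have hlgt : (i:ℕ)+1 ≤ (l:ℕ) := by omega
            have him : (i:ℕ) < m := by have := l.isLt; omega
            have e1 : Fin.succ (l.succAbove ⟨(i:ℕ)-1, by omega⟩) = i :=
              Fin.ext (by simp only [Fin.val_succ, val_sa, Fin.val_mk]; split_ifs <;> omega)
            have e2 : Fin.succ (l.succAbove ⟨(i:ℕ), by omega⟩) = j :=
              Fin.ext (by simp only [Fin.val_succ, val_sa, Fin.val_mk]; split_ifs <;> omega)
            have hveq : (v ∘ Fin.succ ∘ l.succAbove) ⟨(i:ℕ)-1, by omega⟩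
                = (v ∘ Fin.succ ∘ l.succAbove) ⟨(i:ℕ), by omega⟩ :=
              (congrArg v e1).trans (hv.trans (congrArg v e2).symm)
            exact IH m (by omega) (v ∘ Fin.succ ∘ l.succAbove)
              ⟨(i:ℕ)-1, by omega⟩ ⟨(i:ℕ), by omega⟩ (by simp only [Fin.val_mk]; omega) hveq
        rw [pfg_expand]
        apply Finset.sum_involution
          (fun l _ => if l = l₁ then l₂ else if l = l₂ then l₁ else l)
        · intro l _
          by_cases h1 : l = l₁
          · subst h1
            rw [if_pos rfl]
            exact hpair
          · by_cases h2 : l = l₂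
            · subst h2
              rw [if_neg h1, if_pos rfl]
              rw [add_comm]
              exact hpair
            · rw [if_neg h1, if_neg h2, hzero l h1 h2, add_zero]
        · intro l _ hfl
          by_cases h1 : l = l₁
          · subst h1; rw [if_pos rfl]; exact Ne.symm hne12
          · by_cases h2 : l = l₂
            · subst h2; rw [if_neg h1, if_pos rfl]; exact hne12
            · exact absurd (hzero l h1 h2) hfl
        · intro l _
          exact Finset.mem_univ _
        · intro l _
          by_cases h1 : l = l₁
          · subst h1; simp [hne12, Ne.symm hne12]
          · by_cases h2 : l = l₂
            · subst h2; simp [hne12, Ne.symm hne12, h1]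
            · simp [h1, h2]

lemma pfg_swap_adj (hb : ∀ x, b x x = 0) {m : ℕ} (v : Fin m → N) (i j : Fin m)
    (hij : (i:ℕ)+1 = (j:ℕ)) :
    pfg b (v ∘ Equiv.swap i j) = - pfg b v := by
  have hne : i ≠ j := by intro h; rw [h] at hij; omega
  have key : pfg b (Function.update (Function.update v i (v i + v j)) j (v i + v j)) = 0 := by
    apply pfg_adj b hb _ i j hij
    simp [Function.update_of_ne hne]
  rw [pfg_update_add] at key
  rw [Function.update_comm hne, Function.update_comm hne] at key
  rw [pfg_update_add, pfg_update_add] at key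
  have h1 : pfg b (Function.update (Function.update v j (v i)) i (v i)) = 0 := by
    apply pfg_adj b hb _ i j hij
    simp [Function.update_of_ne hne, Function.update_of_ne (Ne.symm hne)]
  have h4 : pfg b (Function.update (Function.update v j (v j)) i (v j)) = 0 := by
    apply pfg_adj b hb _ i j hij
    simp [Function.update_of_ne hne, Function.update_of_ne (Ne.symm hne)]
  have h3 : Function.update (Function.update v j (v j)) i (v i) = v := by
    rw [Function.update_eq_self, Function.update_eq_self]
  have hsw : Function.update (Function.update v j (v i)) i (v j) = v ∘ Equiv.swap i j := by
    funext t
    rcases eq_or_ne t i with rfl | hti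
    · simp [Equiv.swap_apply_left]
    · rcases eq_or_ne t j with rfl | htj
      · simp [Equiv.swap_apply_right, Function.update_of_ne (Ne.symm hne)]
      · simp [Equiv.swap_apply_of_ne_of_ne hti htj, Function.update_of_ne hti,
          Function.update_of_ne htj]
  rw [h1, h3, h4, hsw] at key
  linear_combination key

lemma pfg_eq_zero (hb : ∀ x, b x x = 0) {m : ℕ} (v : Fin m → N) (i j : Fin m)
    (hne : i ≠ j) (hv : v i = v j) : pfg b v = 0 := by
  suffices h : ∀ (d : ℕ) (v : Fin m → N) (i j : Fin m), (i:ℕ) < (j:ℕ) →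
      (j:ℕ) - (i:ℕ) ≤ d → v i = v j → pfg b v = 0 by
    rcases Nat.lt_or_ge (i:ℕ) (j:ℕ) with hlt | hge
    · exact h ((j:ℕ)) v i j hlt (by omega) hv
    · have hlt : (j:ℕ) < (i:ℕ) := by
        rcases Nat.lt_or_ge (j:ℕ) (i:ℕ) with h1 | h1
        · exact h1
        · exact absurd (Fin.ext (by omega : (i:ℕ) = (j:ℕ))) hne
      exact h ((i:ℕ)) v j i hlt (by omega) hv.symm
  intro d
  induction d with
  | zero => intro v i j h1 h2 _; omega
  | succ d IHd =>
    intro v i j h1 h2 hv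
    rcases eq_or_ne ((i:ℕ)+1) ((j:ℕ)) with hadj | hnadj
    · exact pfg_adj b hb v i j hadj hv
    · have hj1 : 1 ≤ (j:ℕ) := by omega
      set j' : Fin m := ⟨(j:ℕ)-1, by have := j.isLt; omega⟩ with hj'
      have hadj : (j':ℕ)+1 = (j:ℕ) := by simp [hj']; omega
      have hswap := pfg_swap_adj b hb v j' j hadj
      have hij' : i ≠ j' := by
        intro h
        have := congrArg Fin.val h
        simp [hj'] at this
        omega
      have hijne : i ≠ j := fun h => by rw [h] at h1; omega
      have hw : (v ∘ Equiv.swap j' j) i = (v ∘ Equiv.swap j' j) j' := by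
        show v (Equiv.swap j' j i) = v (Equiv.swap j' j j')
        rw [Equiv.swap_apply_of_ne_of_ne hij' hijne, Equiv.swap_apply_left]
        exact hv
      have hz := IHd (v ∘ Equiv.swap j' j) i j' (by simp [hj']; omega)
        (by simp [hj']; omega) hw
      rw [hz] at hswap
      have h0 : -pfg b v = 0 := hswap.symm
      exact neg_eq_zero.mp h0

/-- `pfg` as a multilinear map. -/
noncomputable def pfgML (m : ℕ) : MultilinearMap R (fun _ : Fin m => N) R where
  toFun := pfg b
  map_update_add' := by
    intro dec v i x y
    rw [Subsingleton.elim dec (instDecidableEqFin m)]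
    exact pfg_update_add b v i x y
  map_update_smul' := by
    intro dec v i c x
    rw [Subsingleton.elim dec (instDecidableEqFin m)]
    rw [smul_eq_mul]
    exact pfg_update_smul b v i c x

/-- `pfg` as an alternating map. -/
noncomputable def pfgAlt (hb : ∀ x, b x x = 0) (m : ℕ) : N [⋀^Fin m]→ₗ[R] R :=
  { pfgML b m with
    map_eq_zero_of_eq' := fun v i j hv hne => pfg_eq_zero b hb v i j hne hv }

lemma pfgAlt_apply (hb : ∀ x, b x x = 0) {m : ℕ} (v : Fin m → N) :
    pfgAlt b hb m v = pfg b v := rfl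

end PfAux


open PfAux

/-- if `A` is an `n × n` alternating matrix over a commutative ring
and `M` is any `n × n` matrix, then `Pf(Mᵀ * A * M) = det M * Pf A`. -/
theorem pf_conjugate {R : Type*} [CommRing R] {n : ℕ}
    (A M : Matrix (Fin n) (Fin n) R)
    (hA : Aᵀ = -A) (hdiag : ∀ i, A i i = 0) :
    Matrix.pf (Mᵀ * A * M) = M.det * Matrix.pf A := by
  classical
  set b : (Fin n → R) →ₗ[R] (Fin n → R) →ₗ[R] R :=
    LinearMap.mk₂ R (fun x y => x ⬝ᵥ A.mulVec y)
      (fun x x' y => by simp [add_dotProduct])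
      (fun c x y => by simp [smul_dotProduct])
      (fun x y y' => by simp [Matrix.mulVec_add, dotProduct_add])
      (fun c x y => by simp [Matrix.mulVec_smul, dotProduct_smul])
    with hbdef
  have hbapp : ∀ x y, b x y = x ⬝ᵥ A.mulVec y := fun x y => rfl
  have hb : ∀ x, b x x = 0 := by
    intro x
    rw [hbapp]
    have : x ⬝ᵥ A.mulVec x = ∑ p : Fin n × Fin n, x p.1 * (A p.1 p.2 * x p.2) := by
      simp only [dotProduct, Matrix.mulVec, Finset.mul_sum]
      rw [← Finset.sum_product', Finset.univ_product_univ]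
    rw [this]
    apply Finset.sum_involution (fun p _ => (p.2, p.1))
    · intro p _
      have hAs : A p.2 p.1 = - A p.1 p.2 := by
        have h := congrFun (congrFun hA p.1) p.2
        simpa [Matrix.transpose_apply, Matrix.neg_apply] using h
      show x p.1 * (A p.1 p.2 * x p.2) + x p.2 * (A p.2 p.1 * x p.1) = 0
      rw [hAs]; ring
    · intro p _ hf hc
      exfalso
      apply hf
      have hp : p.2 = p.1 := congrArg Prod.fst hc
      show x p.1 * (A p.1 p.2 * x p.2) = 0
      rw [hp, hdiag]
      ring
    · exact fun p _ => Finset.mem_univ _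
    · intro p _; rfl
  have hgram : Mᵀ * A * M = Matrix.of (fun i j : Fin n => b (Mᵀ i) (Mᵀ j)) := by
    ext i j
    rw [Matrix.of_apply, hbapp]
    show (Mᵀ * A * M) i j = Mᵀ i ⬝ᵥ A.mulVec (Mᵀ j)
    simp only [Matrix.mul_apply, dotProduct, Matrix.mulVec, Matrix.transpose_apply,
      Finset.sum_mul, Finset.mul_sum]
    rw [Finset.sum_comm]
    exact Finset.sum_congr rfl fun k _ => Finset.sum_congr rfl fun l _ => by ring
  have h2 : Matrix.pf (Mᵀ * A * M) = pfg b (fun i => Mᵀ i) := by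
    rw [hgram]; rfl
  have h3 : pfg b (⇑(Pi.basisFun R (Fin n))) = Matrix.pf A := by
    have hAg : (Matrix.of fun i j : Fin n =>
        b (Pi.basisFun R (Fin n) i) (Pi.basisFun R (Fin n) j)) = A := by
      ext i j
      rw [Matrix.of_apply, hbapp, Pi.basisFun_apply, Pi.basisFun_apply, Matrix.mulVec_single,
        single_dotProduct]
      simp
    show Matrix.pf (Matrix.of fun i j => b _ _) = _
    rw [hAg]
  have h4 := AlternatingMap.eq_smul_basis_det (Pi.basisFun R (Fin n)) (pfgAlt b hb n)
  have h5 := congrArg (fun (g : (Fin n → R) [⋀^Fin n]→ₗ[R] R) => g (fun i => Mᵀ i)) h4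
  simp only [AlternatingMap.smul_apply] at h5
  rw [Pi.basisFun_det] at h5
  have h6 : (Matrix.detRowAlternating (fun i => Mᵀ i) : R) = Mᵀ.det := rfl
  rw [h6] at h5
  rw [pfgAlt_apply, pfgAlt_apply] at h5
  rw [h2, h5, h3, Matrix.det_transpose, smul_eq_mul, mul_comm]
end

section
/- Let k be a field, U a finite-dimensional k-vector space, and Φ an element of D_s U* = Hom_k(Sym_s U, k), viewed inside the graded dual D_• U* of Sym_• U with its Sym_• U-module structure. Then ann_{D_• U*}(ann_{Sym_• U}(Φ)) equals the Sym_• U-submodule of D_• U* generated by Φ. -/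
open MvPolynomial

variable {k : Type*} [Field k] {σ : Type*} [Fintype σ]

/-- Contraction: the action of a polynomial `μ ∈ Sym_• U` on a functional
`w` in the (graded) dual `D_• U*` of the polynomial ring:
`(μ ⋄ w)(ν) = w(μ ν)`. -/
noncomputable def contr (μ : MvPolynomial σ k)
    (w : Module.Dual k (MvPolynomial σ k)) : Module.Dual k (MvPolynomial σ k) :=
  w.comp (LinearMap.mulLeft k μ)

theorem contr_apply (μ : MvPolynomial σ k) (w : Module.Dual k (MvPolynomial σ k))
    (p : MvPolynomial σ k) : contr μ w p = w (μ * p) := rfl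

/-- `contr · Φ` bundled as a linear map in the first argument. -/
noncomputable def Lc (Φ : Module.Dual k (MvPolynomial σ k)) :
    MvPolynomial σ k →ₗ[k] Module.Dual k (MvPolynomial σ k) where
  toFun r := contr r Φ
  map_add' a b := by ext p; simp [contr_apply, add_mul]
  map_smul' c a := by ext p; simp [contr_apply, smul_mul_assoc]

/-- for `Φ` in the degree-`s` part of the graded dual of
`Sym_• U` (`U` finite dimensional, with a chosen basis `σ`), the annihilator
in the dual of the annihilator ideal of `Φ` is exactly the `Sym_• U`-submodule
generated by `Φ`, i.e. the set of all contractions `μ ⋄ Φ`. -/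
theorem ann_ann_eq_cyclic (s : ℕ) (Φ : Module.Dual k (MvPolynomial σ k))
    (hΦ : ∀ p : MvPolynomial σ k, Φ p = Φ (homogeneousComponent s p)) :
    {w : Module.Dual k (MvPolynomial σ k) |
        ∀ μ : MvPolynomial σ k, contr μ Φ = 0 → contr μ w = 0} =
      {w : Module.Dual k (MvPolynomial σ k) |
        ∃ r : MvPolynomial σ k, w = contr r Φ} := by
  classical
  ext w
  simp only [Set.mem_setOf_eq]
  constructor
  · intro hw
    -- high-degree homogeneous pieces annihilate Φ
    have hhigh : ∀ d : ℕ, s < d → ∀ q : MvPolynomial σ k, q.IsHomogeneous d →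
        contr q Φ = 0 := by
      intro d hd q hq
      refine LinearMap.ext fun ν => ?_
      simp only [contr_apply, LinearMap.zero_apply]
      rw [hΦ (q * ν)]
      conv_lhs => rw [← sum_homogeneousComponent ν]
      rw [Finset.mul_sum, map_sum, map_sum]
      refine Finset.sum_eq_zero fun j _ => ?_
      have hmem : q * homogeneousComponent j ν ∈ homogeneousSubmodule σ k (d + j) :=
        (mem_homogeneousSubmodule _ _).2
          (hq.mul ((mem_homogeneousSubmodule _ _).1 (homogeneousComponent_mem j ν)))
      rw [homogeneousComponent_of_mem hmem, if_neg (by omega), map_zero]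
    -- truncation to degrees ≤ s
    set T : MvPolynomial σ k →ₗ[k] MvPolynomial σ k :=
      ∑ i ∈ Finset.range (s + 1), homogeneousComponent i with hTdef
    have hTapply : ∀ p : MvPolynomial σ k,
        T p = ∑ i ∈ Finset.range (s + 1), homogeneousComponent i p := by
      intro p; simp [hTdef, LinearMap.sum_apply]
    set N : Submodule k (MvPolynomial σ k) := restrictTotalDegree σ k s with hN
    have hTmem : ∀ p : MvPolynomial σ k, T p ∈ N := by
      intro p
      rw [hTapply]
      refine Submodule.sum_mem _ fun i hi => ?_
      rw [hN, mem_restrictTotalDegree]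
      refine le_trans ?_ (Nat.lt_succ_iff.1 (Finset.mem_range.1 hi))
      exact ((mem_homogeneousSubmodule _ _).1 (homogeneousComponent_mem i p)).totalDegree_le
    -- the tail of any polynomial annihilates Φ
    have hdiff : ∀ p : MvPolynomial σ k, contr (p - T p) Φ = 0 := by
      intro p
      have h1 : ∑ i ∈ Finset.range (max p.totalDegree s + 1), homogeneousComponent i p = p := by
        rw [← Finset.sum_subset (Finset.range_subset_range.2 (by omega) :
              Finset.range (p.totalDegree + 1) ⊆ Finset.range (max p.totalDegree s + 1)) ?_]
        · exact sum_homogeneousComponent p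
        · intro i _ hni
          simp only [Finset.mem_range, not_lt] at hni
          exact homogeneousComponent_eq_zero _ p (Nat.lt_of_succ_le hni)
      have h3 : (Finset.range (max p.totalDegree s + 1)).filter (fun i => ¬ s < i)
          = Finset.range (s + 1) := by
        ext i
        simp only [Finset.mem_filter, Finset.mem_range, not_lt]
        omega
      have hrep : p - T p = ∑ i ∈ (Finset.range (max p.totalDegree s + 1)).filter
          (fun i => s < i), homogeneousComponent i p := by
        rw [hTapply p, ← h3, sub_eq_iff_eq_add, Finset.sum_filter_add_sum_filter_not]
        exact h1.symm
      have hLc : contr (p - T p) Φ = Lc Φ (p - T p) := rfl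
      rw [hLc, hrep, map_sum]
      exact Finset.sum_eq_zero fun i hi =>
        hhigh i (Finset.mem_filter.1 hi).2 _
          ((mem_homogeneousSubmodule _ _).1 (homogeneousComponent_mem i p))
    -- w vanishes on the annihilator ideal
    have hw0 : ∀ μ : MvPolynomial σ k, contr μ Φ = 0 → w μ = 0 := by
      intro μ hμ
      have h := congrArg (fun f : Module.Dual k (MvPolynomial σ k) => f 1) (hw μ hμ)
      simpa [contr_apply] using h
    -- finite-dimensional duality on N
    let M : N →ₗ[k] Module.Dual k N := (N.subtype.dualMap).comp ((Lc Φ).comp N.subtype)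
    have hM_apply : ∀ n m : N, M n m = Φ ((n : MvPolynomial σ k) * m) := fun n m => rfl
    have hsymm : ∀ n m : N, M n m = M m n := by
      intro n m; rw [hM_apply, hM_apply, mul_comm]
    have hkerK : ∀ n : N, M n = 0 → contr (n : MvPolynomial σ k) Φ = 0 := by
      intro n hn
      refine LinearMap.ext fun p => ?_
      simp only [contr_apply, LinearMap.zero_apply]
      have h1 : Φ ((n : MvPolynomial σ k) * (p - T p)) = 0 := by
        have h := congrArg
          (fun f : Module.Dual k (MvPolynomial σ k) => f (n : MvPolynomial σ k)) (hdiff p)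
        simpa [contr_apply, mul_comm] using h
      have h2 : Φ ((n : MvPolynomial σ k) * T p) = 0 := by
        have h := congrArg (fun f : Module.Dual k N => f ⟨T p, hTmem p⟩) hn
        simpa [hM_apply] using h
      have hmul : (n : MvPolynomial σ k) * p
          = (n : MvPolynomial σ k) * T p + (n : MvPolynomial σ k) * (p - T p) := by ring
      rw [hmul, map_add, h1, h2, add_zero]
    have hrange : LinearMap.range M = (LinearMap.ker M).dualAnnihilator := by
      apply Submodule.eq_of_le_of_finrank_eq
      · rintro _ ⟨n, rfl⟩
        rw [Submodule.mem_dualAnnihilator]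
        intro m hm
        rw [hsymm, LinearMap.mem_ker.1 hm]
        rfl
      · have h1 := LinearMap.finrank_range_add_finrank_ker M
        have h2 := Submodule.finrank_quotient_add_finrank (LinearMap.ker M)
        have h3 : Module.finrank k (N ⧸ LinearMap.ker M)
            = Module.finrank k (LinearMap.ker M).dualAnnihilator :=
          (Subspace.quotEquivAnnihilator _).finrank_eq
        omega
    have hwann : N.subtype.dualMap w ∈ (LinearMap.ker M).dualAnnihilator := by
      rw [Submodule.mem_dualAnnihilator]
      intro m hm
      exact hw0 _ (hkerK m (LinearMap.mem_ker.1 hm))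
    rw [← hrange] at hwann
    obtain ⟨n, hn⟩ := hwann
    refine ⟨(n : MvPolynomial σ k), ?_⟩
    refine LinearMap.ext fun p => ?_
    show w p = Φ ((n : MvPolynomial σ k) * p)
    have hz : w (p - T p) = 0 := hw0 _ (hdiff p)
    have hsplit : w p = w (T p) + w (p - T p) := by rw [← map_add]; congr 1; ring
    have hTp : w (T p) = Φ ((n : MvPolynomial σ k) * T p) := by
      have h := congrArg (fun f : Module.Dual k N => f ⟨T p, hTmem p⟩) hn
      simpa [hM_apply] using h.symm
    have hz2 : Φ ((n : MvPolynomial σ k) * (p - T p)) = 0 := by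
      have h := congrArg
        (fun f : Module.Dual k (MvPolynomial σ k) => f (n : MvPolynomial σ k)) (hdiff p)
      simpa [contr_apply, mul_comm] using h
    rw [hsplit, hz, add_zero, hTp,
      show (n : MvPolynomial σ k) * p
          = (n : MvPolynomial σ k) * T p + (n : MvPolynomial σ k) * (p - T p) from by ring,
      map_add, hz2, add_zero]
  · rintro ⟨r, rfl⟩ μ hμ
    refine LinearMap.ext fun p => ?_
    have h := congrArg (fun f : Module.Dual k (MvPolynomial σ k) => f (r * p)) hμ
    simp only [contr_apply, LinearMap.zero_apply] at h ⊢
    rw [show r * (μ * p) = μ * (r * p) from by ring]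
    exact h
end

section
/- Let R = k[x,y,z] be a standard graded polynomial ring over a field, n a positive even integer, U = R_1, Φ ∈ D_{2n-1} U*, and J = ann_{Sym U}(Φ). Assume J_{n-1} = 0 and that x is a weak Lefschetz element for R/J. Then the ideal I = ann_{Sym U}(x(Φ)) satisfies I_{n-1} = 0 and (R/I)_{2n-1} = 0; that is, I is a linearly presented grade-three Gorenstein ideal generated in degree n. -/
open MvPolynomial

/-- The annihilator ideal `ann_{Sym U}(Φ) = {μ | μ(Φ) = 0}` of a functional
`Φ` on the polynomial ring, where `μ(Φ)` is the contraction `ν ↦ Φ(μν)`. -/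
def annIdeal {k : Type*} [Field k] {σ : Type*}
    (Φ : Module.Dual k (MvPolynomial σ k)) : Ideal (MvPolynomial σ k) where
  carrier := {μ | ∀ ν, Φ (μ * ν) = 0}
  add_mem' := by
    intro a b ha hb ν
    rw [add_mul, map_add, ha ν, hb ν, add_zero]
  zero_mem' := by intro ν; rw [zero_mul, map_zero]
  smul_mem' := by
    intro c μ hμ ν
    have : (c • μ) * ν = μ * (c * ν) := by rw [smul_eq_mul]; ring
    rw [this]
    exact hμ (c * ν)

variable (k : Type*) [Field k]

/-- The degree-`i` graded piece of the quotient `k[x,y,z]/J`, realized as the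
image of the homogeneous polynomials of degree `i`. -/
noncomputable def piece (J : Ideal (MvPolynomial (Fin 3) k)) (i : ℕ) :
    Submodule k (MvPolynomial (Fin 3) k ⧸ J) :=
  Submodule.map (Ideal.Quotient.mkₐ k J).toLinearMap (homogeneousSubmodule (Fin 3) k i)



section Aux

variable {k : Type*} [Field k]

lemma mem_annIdeal_iff {σ : Type*} {Φ : Module.Dual k (MvPolynomial σ k)}
    {μ : MvPolynomial σ k} : μ ∈ annIdeal Φ ↔ ∀ ν, Φ (μ * ν) = 0 := Iff.rfl

lemma finV (i : ℕ) : FiniteDimensional k (homogeneousSubmodule (Fin 3) k i) :=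
  Submodule.finiteDimensional_of_le (S₂ := restrictTotalDegree (Fin 3) k i)
    (fun p hp => (mem_restrictTotalDegree _ _ _).2
      ((mem_homogeneousSubmodule _ _).1 hp).totalDegree_le)

variable {n : ℕ} {Φ : Module.Dual k (MvPolynomial (Fin 3) k)}
    (hΦ : ∀ p, Φ p = Φ (homogeneousComponent (2 * n - 1) p))

include hΦ

lemma phi_vanish {q : MvPolynomial (Fin 3) k} {e : ℕ}
    (hq : q ∈ homogeneousSubmodule (Fin 3) k e) (he : e ≠ 2 * n - 1) : Φ q = 0 := by
  rw [hΦ q, homogeneousComponent_of_mem hq, if_neg (Ne.symm he), map_zero]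

lemma phi_mul_eq_zero {p : MvPolynomial (Fin 3) k} {e : ℕ}
    (hp : p ∈ homogeneousSubmodule (Fin 3) k e)
    (h : ∀ ν ∈ homogeneousSubmodule (Fin 3) k (2 * n - 1 - e), Φ (p * ν) = 0) :
    ∀ ν, Φ (p * ν) = 0 := by
  intro ν
  conv_lhs => rw [← sum_homogeneousComponent ν]
  rw [Finset.mul_sum, map_sum]
  refine Finset.sum_eq_zero fun d _ => ?_
  have hcomp : homogeneousComponent d ν ∈ homogeneousSubmodule (Fin 3) k d :=
    (mem_homogeneousSubmodule _ _).2 (homogeneousComponent_isHomogeneous d ν)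
  by_cases hd : e + d = 2 * n - 1
  · have hd' : d = 2 * n - 1 - e := by omega
    exact h _ (hd' ▸ hcomp)
  · exact phi_vanish hΦ ((mem_homogeneousSubmodule _ _).2
      (((mem_homogeneousSubmodule _ _).1 hp).mul
        ((mem_homogeneousSubmodule _ _).1 hcomp))) hd

end Aux

set_option maxHeartbeats 1000000 in
set_option synthInstance.maxHeartbeats 400000 in
/-- let `n` be even and positive, `Φ` in the degree-`2n-1` part
of the graded dual of `R = k[x,y,z]`, and `J = ann Φ`.  Assume `J_{n-1} = 0`
and that `x` is a weak Lefschetz element for `R/J`.  Then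
`I = ann(x(Φ))` satisfies `I_{n-1} = 0` and `(R/I)_{2n-1} = 0`; that is (by
Macaulay duality in three variables), `I` is a linearly presented grade-three
Gorenstein ideal generated in degree `n`. -/
theorem ann_x_phi_linearly_presented (n : ℕ) (hn : Even n) (hpos : 0 < n)
    (Φ : Module.Dual k (MvPolynomial (Fin 3) k))
    (hΦ : ∀ p, Φ p = Φ (homogeneousComponent (2 * n - 1) p))
    (hJ : ∀ μ ∈ annIdeal Φ, μ ∈ homogeneousSubmodule (Fin 3) k (n - 1) → μ = 0)
    (hWL : ∀ i : ℕ,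
      (∀ a ∈ piece k (annIdeal Φ) i,
        Ideal.Quotient.mk (annIdeal Φ) (X 0) * a = 0 → a = 0) ∨
      (∀ b ∈ piece k (annIdeal Φ) (i + 1), ∃ a ∈ piece k (annIdeal Φ) i,
        Ideal.Quotient.mk (annIdeal Φ) (X 0) * a = b)) :
    (∀ μ ∈ annIdeal (Φ.comp (LinearMap.mulLeft k (X 0 : MvPolynomial (Fin 3) k))),
      μ ∈ homogeneousSubmodule (Fin 3) k (n - 1) → μ = 0) ∧
    (∀ μ ∈ homogeneousSubmodule (Fin 3) k (2 * n - 1),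
      μ ∈ annIdeal (Φ.comp (LinearMap.mulLeft k (X 0 : MvPolynomial (Fin 3) k)))) := by
  classical
  set J := annIdeal Φ with hJdef
  have hmemI : ∀ μ : MvPolynomial (Fin 3) k,
      μ ∈ annIdeal (Φ.comp (LinearMap.mulLeft k (X 0 : MvPolynomial (Fin 3) k))) ↔
        (X 0 : MvPolynomial (Fin 3) k) * μ ∈ J := by
    intro μ
    rw [mem_annIdeal_iff, mem_annIdeal_iff]
    constructor
    · intro h ν
      have := h ν
      simp only [LinearMap.comp_apply, LinearMap.mulLeft_apply] at this
      rwa [← mul_assoc] at this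
    · intro h ν
      simp only [LinearMap.comp_apply, LinearMap.mulLeft_apply]
      rw [← mul_assoc]
      exact h ν
  constructor
  · -- Part 1 : I_{n-1} = 0
    have key : ∀ μ ∈ homogeneousSubmodule (Fin 3) k (n - 1),
        Ideal.Quotient.mk J μ = 0 → μ = 0 := fun μ hμ h0 =>
      hJ μ (Ideal.Quotient.eq_zero_iff_mem.1 h0) hμ
    intro μ hμI hμ
    have hxμJ : (X 0 : MvPolynomial (Fin 3) k) * μ ∈ J := (hmemI μ).1 hμI
    have hmkμ : Ideal.Quotient.mk J μ ∈ piece k J (n - 1) := ⟨μ, hμ, rfl⟩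
    have hmul0 : Ideal.Quotient.mk J (X 0) * Ideal.Quotient.mk J μ = 0 := by
      rw [← map_mul, Ideal.Quotient.eq_zero_iff_mem]
      exact hxμJ
    rcases hWL (n - 1) with hinj | hsurj
    · exact key μ hμ (hinj _ hmkμ hmul0)
    · -- dimension argument
      haveI : FiniteDimensional k (homogeneousSubmodule (Fin 3) k (n - 1)) := finV (n - 1)
      haveI : FiniteDimensional k (homogeneousSubmodule (Fin 3) k n) := finV n
      set B : (homogeneousSubmodule (Fin 3) k (n - 1)) →ₗ[k]
          (homogeneousSubmodule (Fin 3) k n) →ₗ[k] k :=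
        LinearMap.mk₂ k (fun a b => Φ ((a : MvPolynomial (Fin 3) k) * (b : MvPolynomial (Fin 3) k)))
          (fun a a' b => by simp [add_mul])
          (fun c a b => by simp [smul_mul_assoc])
          (fun a b b' => by simp [mul_add])
          (fun c a b => by simp [mul_smul_comm]) with hB
      have hBinj : Function.Injective B := by
        rw [← LinearMap.ker_eq_bot, LinearMap.ker_eq_bot']
        intro a ha
        have h2 : 2 * n - 1 - (n - 1) = n := by omega
        have haJ : (a : MvPolynomial (Fin 3) k) ∈ J := by
          refine phi_mul_eq_zero hΦ a.2 (fun ν' hν' => ?_)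
          rw [h2] at hν'
          have := LinearMap.congr_fun ha ⟨ν', hν'⟩
          simpa [hB] using this
        exact Subtype.ext (hJ _ haJ a.2)
      have hBsurj : Function.Surjective B.flip := LinearMap.flip_surjective_iff₂.2 hBinj
      set g : ∀ i : ℕ, (homogeneousSubmodule (Fin 3) k i) →ₗ[k] (MvPolynomial (Fin 3) k ⧸ J) :=
        fun i => (Ideal.Quotient.mkₐ k J).toLinearMap.comp
          (homogeneousSubmodule (Fin 3) k i).subtype with hg
      have hrange : ∀ i, LinearMap.range (g i) = piece k J i := fun i => by
        rw [hg, LinearMap.range_comp, Submodule.range_subtype]; rfl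
      have hker_iff : ∀ (i : ℕ) (a : homogeneousSubmodule (Fin 3) k i),
          g i a = 0 ↔ (a : MvPolynomial (Fin 3) k) ∈ J := fun i a => by
        simp only [hg, LinearMap.comp_apply, Submodule.subtype_apply,
          AlgHom.toLinearMap_apply, Ideal.Quotient.mkₐ_eq_mk]
        exact Ideal.Quotient.eq_zero_iff_mem
      have hker1 : LinearMap.ker (g (n - 1)) = ⊥ := by
        rw [LinearMap.ker_eq_bot']
        intro a ha
        exact Subtype.ext (hJ _ ((hker_iff _ a).1 ha) a.2)
      have hker2 : LinearMap.ker (g n) = LinearMap.ker B.flip := by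
        ext b
        simp only [LinearMap.mem_ker]
        rw [hker_iff n b]
        constructor
        · intro hb
          ext a
          have := hb ((a : MvPolynomial (Fin 3) k))
          simpa [hB, mul_comm] using this
        · intro hb
          have h2 : 2 * n - 1 - n = n - 1 := by omega
          refine phi_mul_eq_zero hΦ b.2 (fun ν' hν' => ?_)
          rw [h2] at hν'
          have := LinearMap.congr_fun hb ⟨ν', hν'⟩
          simpa [hB, mul_comm] using this
      have e1 := LinearMap.finrank_range_add_finrank_ker (g (n - 1))
      have e2 := LinearMap.finrank_range_add_finrank_ker (g n)
      have e3 := LinearMap.finrank_range_add_finrank_ker B.flip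
      have hrtop : LinearMap.range B.flip = ⊤ := LinearMap.range_eq_top.2 hBsurj
      have hdualrk : Module.finrank k (Module.Dual k (homogeneousSubmodule (Fin 3) k (n - 1)))
          = Module.finrank k (homogeneousSubmodule (Fin 3) k (n - 1)) :=
        Subspace.dual_finrank_eq
      rw [hrtop, finrank_top, hdualrk] at e3
      rw [hker1, finrank_bot] at e1
      rw [hker2] at e2
      rw [hrange] at e1 e2
      have hdim : Module.finrank k (piece k J (n - 1)) = Module.finrank k (piece k J n) := by
        omega
      have hmapin : ∀ x ∈ piece k J (n - 1),
          (LinearMap.mulLeft k (Ideal.Quotient.mk J (X 0 : MvPolynomial (Fin 3) k))) x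
            ∈ piece k J n := by
        rintro x ⟨μ', hμ', rfl⟩
        refine ⟨X 0 * μ', ?_, ?_⟩
        · have hh := (isHomogeneous_X k (0 : Fin 3)).mul ((mem_homogeneousSubmodule _ _).1 hμ')
          rw [show 1 + (n - 1) = n by omega] at hh
          exact (mem_homogeneousSubmodule _ _).2 hh
        · simp [Ideal.Quotient.mkₐ_eq_mk]
      set L : (piece k J (n - 1)) →ₗ[k] (piece k J n) :=
        (LinearMap.mulLeft k (Ideal.Quotient.mk J (X 0 : MvPolynomial (Fin 3) k))).restrict
          hmapin with hL
      have hn1 : n - 1 + 1 = n := by omega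
      have hLsurj : Function.Surjective L := by
        rintro ⟨b, hb⟩
        obtain ⟨a, ha, hab⟩ := hsurj b (by rw [hn1]; exact hb)
        exact ⟨⟨a, ha⟩, Subtype.ext (by simpa [hL] using hab)⟩
      haveI : FiniteDimensional k (piece k J (n - 1)) := by
        rw [← hrange (n - 1)]; infer_instance
      haveI : FiniteDimensional k (piece k J n) := by
        rw [← hrange n]; infer_instance
      have hLinj : Function.Injective L :=
        (LinearMap.injective_iff_surjective_of_finrank_eq_finrank hdim).2 hLsurj
      have hL0 : L ⟨Ideal.Quotient.mk J μ, hmkμ⟩ = 0 :=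
        Subtype.ext (by simpa [hL] using hmul0)
      have hmk0 : (⟨Ideal.Quotient.mk J μ, hmkμ⟩ : piece k J (n - 1)) = 0 :=
        hLinj (by rw [hL0, map_zero])
      exact key μ hμ (congrArg Subtype.val hmk0)
  · -- Part 2 : (R/I)_{2n-1} = 0
    intro μ hμ
    rw [hmemI μ, mem_annIdeal_iff]
    have hx : (X 0 : MvPolynomial (Fin 3) k) * μ
        ∈ homogeneousSubmodule (Fin 3) k (1 + (2 * n - 1)) :=
      (mem_homogeneousSubmodule _ _).2
        ((isHomogeneous_X k (0 : Fin 3)).mul ((mem_homogeneousSubmodule _ _).1 hμ))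
    refine phi_mul_eq_zero hΦ hx (fun ν' hν' => ?_)
    refine phi_vanish hΦ ((mem_homogeneousSubmodule _ _).2
      (((mem_homogeneousSubmodule _ _).1 hx).mul ((mem_homogeneousSubmodule _ _).1 hν'))) ?_
    omega
end

section
/- Let k be a field of characteristic zero, R = k[x,y,z], n an even positive integer, and J = (x^{n+1}, y^{n+1}, z^{n+1}) : (x+y+z)^{n+1}. Then the socle degree of the Artinian Gorenstein algebra R/J is 2n-1. -/
open MvPolynomial

private lemma degree_eq_sum_univ (f : Fin 3 →₀ ℕ) : f.degree = ∑ i : Fin 3, f i :=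
  Finset.sum_subset (Finset.subset_univ _)
    (fun _ _ hi => Finsupp.notMem_support_iff.mp hi)

private lemma mem_I_of_homog {k : Type*} [Field k] {n d : ℕ} (hd : 3*n+1 ≤ d)
    {p : MvPolynomial (Fin 3) k} (hp : p.IsHomogeneous d) :
    p ∈ Ideal.span {(X 0 : MvPolynomial (Fin 3) k)^(n+1), X 1^(n+1), X 2^(n+1)} := by
  nth_rewrite 1 [p.as_sum]
  refine Ideal.sum_mem _ fun m hm => ?_
  have hdeg : m.degree = d := by
    have := hp (mem_support_iff.mp hm)
    rw [Finsupp.degree_eq_weight_one (R := ℕ)]; exact this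
  have hj : ∃ j, n + 1 ≤ m j := by
    by_contra h
    push_neg at h
    have h1 : m.degree = ∑ i : Fin 3, m i := degree_eq_sum_univ m
    have h2 : (∑ i : Fin 3, m i) ≤ 3 * n := by
      rw [Fin.sum_univ_three]
      have := h 0; have := h 1; have := h 2
      omega
    omega
  obtain ⟨j, hj⟩ := hj
  have hle : Finsupp.single j (n+1) ≤ m := by
    rw [Finsupp.le_def]
    intro i
    classical
    by_cases hij : i = j
    · subst hij; simpa using hj
    · simp [Finsupp.single_apply, Ne.symm hij]
  have hsplit : (monomial m) (coeff m p)
      = X j ^ (n+1) * (monomial (m - Finsupp.single j (n+1))) (coeff m p) := by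
    rw [X_pow_eq_monomial, monomial_mul, one_mul, add_tsub_cancel_of_le hle]
  rw [hsplit]
  refine Ideal.mul_mem_right _ _ (Ideal.subset_span ?_)
  fin_cases j <;> simp

private lemma coeff_top_zero {k : Type*} [Field k] {n : ℕ}
    {q : MvPolynomial (Fin 3) k}
    (hq : q ∈ Ideal.span {(X 0 : MvPolynomial (Fin 3) k)^(n+1), X 1^(n+1), X 2^(n+1)}) :
    coeff (Finsupp.single 0 n + Finsupp.single 1 n + Finsupp.single 2 n) q = 0 := by
  set M : Fin 3 →₀ ℕ := Finsupp.single 0 n + Finsupp.single 1 n + Finsupp.single 2 n with hM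
  have hMj : ∀ j : Fin 3, M j = n := by
    intro j
    fin_cases j <;> simp [hM, Finsupp.single_apply]
  have key : ∀ (j : Fin 3) (r : MvPolynomial (Fin 3) k),
      coeff M (r * X j ^ (n+1)) = 0 := by
    intro j r
    rw [X_pow_eq_monomial, coeff_mul_monomial']
    rw [if_neg]
    intro hle
    have := (Finsupp.le_def.mp hle) j
    simp [hMj j] at this
  rw [show ({(X 0 : MvPolynomial (Fin 3) k)^(n+1), X 1^(n+1), X 2^(n+1)} : Set _)
      = insert ((X 0 : MvPolynomial (Fin 3) k)^(n+1)) (insert (X 1^(n+1)) {X 2^(n+1)}) from rfl]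
      at hq
  rw [Ideal.mem_span_insert] at hq
  obtain ⟨a, z, hz, rfl⟩ := hq
  rw [Ideal.mem_span_insert] at hz
  obtain ⟨b, w, hw, rfl⟩ := hz
  rw [Ideal.mem_span_singleton] at hw
  obtain ⟨c, rfl⟩ := hw
  rw [mul_comm _ c] at *
  simp only [coeff_add, key, add_zero]

private lemma coeff_D_pow {k : Type*} [Field k] {n : ℕ} (hpos : 0 < n) :
    coeff (Finsupp.single 1 1 + Finsupp.single 2 n)
      ((X 0 + X 1 + X 2 : MvPolynomial (Fin 3) k) ^ (n+1)) = (n+1 : k) := by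
  set D : Fin 3 →₀ ℕ := Finsupp.single 1 1 + Finsupp.single 2 n with hD
  have hD0 : D 0 = 0 := by simp [hD, Finsupp.single_apply]
  have hD1 : D 1 = 1 := by simp [hD, Finsupp.single_apply]
  have step2 : coeff D ((X 1 + X 2 : MvPolynomial (Fin 3) k) ^ (n+1)) = (n+1 : k) := by
    rw [add_pow, coeff_sum]
    rw [Finset.sum_eq_single_of_mem 1 (Finset.mem_range.mpr (by omega))]
    · rw [← C_eq_coe_nat, mul_comm, coeff_C_mul, X_pow_eq_monomial, X_pow_eq_monomial,
        monomial_mul, coeff_monomial, if_pos (by rw [hD]; simp)]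
      simp
    · intro j hj hjne
      rw [← C_eq_coe_nat, mul_comm, coeff_C_mul, X_pow_eq_monomial, X_pow_eq_monomial,
        monomial_mul, coeff_monomial, if_neg, mul_zero]
      intro h
      have h1 := DFunLike.congr_fun h 1
      rw [hD1] at h1
      simp [Finsupp.single_apply] at h1
      exact hjne h1
  have hsplit : (X 0 + X 1 + X 2 : MvPolynomial (Fin 3) k) = X 0 + (X 1 + X 2) := by ring
  rw [hsplit, add_pow, coeff_sum]
  rw [Finset.sum_eq_single_of_mem 0 (Finset.mem_range.mpr (by omega))]
  · simpa using step2
  · intro i hi hine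
    rw [mul_assoc, X_pow_eq_monomial, coeff_monomial_mul', if_neg]
    intro hle
    have := (Finsupp.le_def.mp hle) 0
    simp [hD0, Finsupp.single_apply] at this
    omega

/-- over a field of characteristic zero, with `n` even and
positive, the Gorenstein ideal `J = (x^{n+1}, y^{n+1}, z^{n+1}) : (x+y+z)^{n+1}`
of `R = k[x,y,z]` has socle degree `2n-1`; that is, the graded piece of `R/J`
in degree `2n-1` is nonzero while all higher graded pieces vanish. -/
theorem socle_degree_colon_ideal {k : Type*} [Field k] [CharZero k]
    (n : ℕ) (hn : Even n) (hpos : 0 < n)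
    (J : Ideal (MvPolynomial (Fin 3) k))
    (hJ : J = Submodule.colon
      (Ideal.span {(X 0 : MvPolynomial (Fin 3) k) ^ (n + 1), X 1 ^ (n + 1), X 2 ^ (n + 1)})
      (Ideal.span {((X 0 + X 1 + X 2 : MvPolynomial (Fin 3) k)) ^ (n + 1)})) :
    (¬ ∀ μ ∈ homogeneousSubmodule (Fin 3) k (2 * n - 1), μ ∈ J) ∧
    (∀ i, 2 * n - 1 < i → ∀ μ ∈ homogeneousSubmodule (Fin 3) k i, μ ∈ J) := by
  subst hJ
  constructor
  · -- witness μ = X0^n * X1^(n-1)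
    intro hall
    set s0 : Fin 3 →₀ ℕ := Finsupp.single 0 n + Finsupp.single 1 (n-1) with hs0
    have hmem : (monomial s0 (1:k)) ∈ homogeneousSubmodule (Fin 3) k (2*n-1) := by
      rw [mem_homogeneousSubmodule]
      apply isHomogeneous_monomial
      rw [degree_eq_sum_univ, Fin.sum_univ_three]
      simp [hs0, Finsupp.single_apply]
      omega
    have hJmem : (monomial s0 (1:k)) * ((X 0 + X 1 + X 2 : MvPolynomial (Fin 3) k) ^ (n+1))
        ∈ Ideal.span {(X 0 : MvPolynomial (Fin 3) k) ^ (n + 1), X 1 ^ (n + 1), X 2 ^ (n + 1)} := by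
      have := Submodule.mem_colon_span_singleton.mp (hall _ hmem)
      rwa [smul_eq_mul] at this
    have hz := coeff_top_zero hJmem
    -- compute the coefficient
    set M : Fin 3 →₀ ℕ := Finsupp.single 0 n + Finsupp.single 1 n + Finsupp.single 2 n with hM
    have hle : s0 ≤ M := by
      rw [Finsupp.le_def]
      intro i
      fin_cases i <;> simp [hs0, hM, Finsupp.single_apply] <;> omega
    have hsub : M - s0 = Finsupp.single 1 1 + Finsupp.single 2 n := by
      ext i
      rw [Finsupp.tsub_apply]
      fin_cases i <;> simp [hs0, hM, Finsupp.single_apply] <;> omega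
    rw [coeff_monomial_mul', if_pos hle, hsub, one_mul, coeff_D_pow hpos] at hz
    have : (n : k) + 1 ≠ 0 := by
      exact_mod_cast (Nat.cast_add_one_ne_zero (R := k) n)
    exact this hz
  · intro i hi μ hμ
    refine Submodule.mem_colon_span_singleton.mpr ?_
    rw [smul_eq_mul]
    have hhom : (μ * (X 0 + X 1 + X 2 : MvPolynomial (Fin 3) k) ^ (n+1)).IsHomogeneous
        (i + (n+1)) := by
      apply IsHomogeneous.mul hμ
      have h1 : ((X 0 + X 1 + X 2 : MvPolynomial (Fin 3) k)).IsHomogeneous 1 :=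
        ((isHomogeneous_X k 0).add (isHomogeneous_X k 1)).add (isHomogeneous_X k 2)
      simpa using h1.pow (n+1)
    exact mem_I_of_homog (by omega) hhom
end
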